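/- Let Γ be a linearly ordered abelian group (written additively) and let U ⊆ Γ be an upward-closed subset (if x ∈ U and x ≤ y then y ∈ U), thought of as the set of elements lying strictly above a cut Ξ in Γ. Then at least one of the following holds: (1) there exists γ < 0 in Γ such that for all x ∈ U, x + γ ∈ U; (2) there exists γ ∈ Γ with γ ∉ U and γ + γ ∈ U; (3) there exists γ ∈ Γ with γ + γ ∉ U and γ ∈ U; (4) U = {x ∈ Γ : x > 0}; (5) U = {x ∈ Γ : x ≥ 0}. -/

import Mathlib

/-- Let `Γ` be a linearly ordered abelian group and `U ⊆ Γ` an upward-closed subset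
(the set of elements lying strictly above a cut `Ξ`).  Then at least one of:
(1) there is `γ < 0` with `x + γ ∈ U` for all `x ∈ U`;
(2) there is `γ` with `γ ∉ U` and `γ + γ ∈ U` (i.e. `γ < Ξ < 2γ`);
(3) there is `γ` with `γ + γ ∉ U` and `γ ∈ U` (i.e. `2γ < Ξ < γ`);
(4) `U = {x : 0 < x}` (the cut is `0⁺`);
(5) `U = {x : 0 ≤ x}` (the cut is `0⁻`). -/
theorem cut_pentachotomy
    {Γ : Type*} [AddCommGroup Γ] [LinearOrder Γ] [IsOrderedAddMonoid Γ]
    (U : Set Γ) (hU : ∀ x ∈ U, ∀ y, x ≤ y → y ∈ U) :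
    (∃ γ : Γ, γ < 0 ∧ ∀ x ∈ U, x + γ ∈ U) ∨
    (∃ γ : Γ, γ ∉ U ∧ γ + γ ∈ U) ∨
    (∃ γ : Γ, γ + γ ∉ U ∧ γ ∈ U) ∨
    U = {x : Γ | 0 < x} ∨
    U = {x : Γ | 0 ≤ x} := by
  by_contra hcon
  push_neg at hcon
  obtain ⟨h1, h2, h3, h4, h5⟩ := hcon
  -- from ¬(2), ¬(3): U and its complement are closed under addition
  have dbl : ∀ a ∈ U, a + a ∈ U := by
    intro a ha
    by_contra hc
    exact h3 a hc ha
  have sumU : ∀ a ∈ U, ∀ b ∈ U, a + b ∈ U := by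
    intro a ha b hb
    rcases le_total a b with h | h
    · exact hU (a + a) (dbl a ha) _ (add_le_add_right h a)
    · exact hU (b + b) (dbl b hb) _ (add_le_add_left h b)
  have sumC : ∀ a ∉ U, ∀ b ∉ U, a + b ∉ U := by
    intro a ha b hb hab
    rcases le_total a b with h | h
    · exact h2 b hb (hU _ hab _ (add_le_add_left h b))
    · exact h2 a ha (hU _ hab _ (add_le_add_right h a))
  -- no negative element of U
  have negU : ∀ γ ∈ U, (0:Γ) ≤ γ := by
    intro γ hγ
    by_contra h
    push_neg at h
    obtain ⟨x, hx, hx'⟩ := h1 γ h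
    exact hx' (sumU x hx γ hγ)
  -- every positive element is in U
  have posU : ∀ x : Γ, 0 < x → x ∈ U := by
    intro x hx
    by_contra hxU
    obtain ⟨y, hy, hy'⟩ := h1 (-x) (neg_lt_zero.mpr hx)
    have : x + (y + -x) ∉ U := sumC x hxU (y + -x) hy'
    rw [show x + (y + -x) = y by abel] at this
    exact this hy
  by_cases h0 : (0:Γ) ∈ U
  · apply h5
    ext x
    simp only [Set.mem_setOf_eq]
    constructor
    · exact negU x
    · intro hx
      rcases hx.lt_or_eq with h | h
      · exact posU x h
      · rwa [← h]
  · apply h4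
    ext x
    simp only [Set.mem_setOf_eq]
    constructor
    · intro hx
      rcases (negU x hx).lt_or_eq with h | h
      · exact h
      · exact absurd (h ▸ hx) h0
    · exact posU x
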